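/- Let (θ_k) satisfy θ_0 = 1, θ_k > 0, (1 − θ_{k+1})/θ_{k+1}² = 1/θ_k², let A : R^m → R^p be linear, b ∈ R^p, and let x^{k+1} = (1 − θ_k)x^k + θ_k z^{k+1}. Then ∑_{k=0}^{K} (1/(2θ_k))‖A(z^{k+1}) − b‖² ≥ (1/(2θ_K²))‖A(x^{K+1}) − b‖². -/

import Mathlib

theorem residual_sum_lower_bound (md p : ℕ) (θ : ℕ → ℝ) (h0 : θ 0 = 1)
    (hpos : ∀ k, 0 < θ k)
    (hrec : ∀ k, (1 - θ (k + 1)) / (θ (k + 1)) ^ 2 = 1 / (θ k) ^ 2)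
    (A : EuclideanSpace ℝ (Fin md) →ₗ[ℝ] EuclideanSpace ℝ (Fin p))
    (b : EuclideanSpace ℝ (Fin p))
    (x z : ℕ → EuclideanSpace ℝ (Fin md))
    (hx : ∀ k, x (k + 1) = (1 - θ k) • x k + θ k • z (k + 1)) (K : ℕ) :
    ∑ k ∈ Finset.range (K + 1), (1 / (2 * θ k)) * ‖A (z (k + 1)) - b‖ ^ 2 ≥
      (1 / (2 * (θ K) ^ 2)) * ‖A (x (K + 1)) - b‖ ^ 2 := by
  induction K with
  | zero =>
      rw [Finset.sum_range_one, hx 0, h0]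
      simp
  | succ K ih =>
      rw [Finset.sum_range_succ]
      set t := θ (K + 1) with htdef
      have ht0 : 0 < t := hpos (K + 1)
      have hθK : 0 < θ K := hpos K
      have hrecK := hrec K
      have ht1 : t ≤ 1 := by
        by_contra h
        push_neg at h
        have hneg : (1 - t) / t ^ 2 < 0 :=
          div_neg_of_neg_of_pos (by linarith) (by positivity)
        rw [hrecK] at hneg
        have : (0:ℝ) < 1 / θ K ^ 2 := by positivity
        linarith
      have hdecomp : A (x (K + 1 + 1)) - b =
          (1 - t) • (A (x (K + 1)) - b) + t • (A (z (K + 1 + 1)) - b) := by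
        rw [hx (K + 1), map_add, map_smul, map_smul]
        have hb : b = (1 - t) • b + t • b := by
          rw [← add_smul]; simp
        rw [smul_sub, smul_sub]
        nth_rewrite 1 [hb]
        abel
      set a := ‖A (x (K + 1)) - b‖ with ha
      set c := ‖A (z (K + 1 + 1)) - b‖ with hc
      set w := ‖A (x (K + 1 + 1)) - b‖ with hwdef
      have hnorm : w ≤ (1 - t) * a + t * c := by
        rw [hwdef, hdecomp]
        calc ‖(1 - t) • (A (x (K + 1)) - b) + t • (A (z (K + 1 + 1)) - b)‖
            ≤ ‖(1 - t) • (A (x (K + 1)) - b)‖ + ‖t • (A (z (K + 1 + 1)) - b)‖ :=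
              norm_add_le _ _
          _ = (1 - t) * a + t * c := by
              rw [norm_smul, norm_smul, Real.norm_of_nonneg (by linarith),
                Real.norm_of_nonneg (le_of_lt ht0)]
      have ha0 : 0 ≤ a := norm_nonneg _
      have hc0 : 0 ≤ c := norm_nonneg _
      have hw0 : 0 ≤ w := norm_nonneg _
      have h2 : w ^ 2 ≤ (1 - t) * a ^ 2 + t * c ^ 2 := by
        nlinarith [sq_nonneg (a - c), mul_nonneg (mul_nonneg ht0.le (sub_nonneg.2 ht1)) (sq_nonneg (a - c))]
      have hrecK' : (1 - t) * θ K ^ 2 = t ^ 2 := by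
        rw [htdef]
        field_simp at hrecK
        rw [div_eq_one_iff_eq (pow_pos (hpos (K + 1)) 2).ne'] at hrecK
        linarith [hrecK]
      have h1 : 1 / (2 * θ K ^ 2) * a ^ 2 = (1 - t) / (2 * t ^ 2) * a ^ 2 := by
        rw [div_mul_eq_mul_div, div_mul_eq_mul_div,
          div_eq_div_iff (by positivity) (by positivity)]
        linear_combination (-2) * a ^ 2 * hrecK'
      have key : 1 / (2 * t ^ 2) * w ^ 2 ≤
          (1 - t) / (2 * t ^ 2) * a ^ 2 + 1 / (2 * t) * c ^ 2 := by
        calc 1 / (2 * t ^ 2) * w ^ 2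
            ≤ 1 / (2 * t ^ 2) * ((1 - t) * a ^ 2 + t * c ^ 2) := by
              apply mul_le_mul_of_nonneg_left h2 (by positivity)
          _ = (1 - t) / (2 * t ^ 2) * a ^ 2 + 1 / (2 * t) * c ^ 2 := by
              field_simp
      linarith [ih, key, h1]
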